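/- arXiv:1808.08508 — 3 statements merged into one kernel-verified Lean document; each statement's English description precedes it below -/
import Mathlib

section
/- In the CU-proposing deferred acceptance algorithm, if a CU c is rejected by a UB u at some point during the execution, then in the final matching u does not hold c, and every CU held by u at the moment of rejection (and at termination whenever u is full) is strictly preferred by u to c. -/
/-- A one-to-many matching market between cellular users (CUs, indexed by
naturals `< numCU`) and unlicensed bands (UBs).  Each CU has a strict
preference list of acceptable UBs (earlier = more preferred); each UB has a
strict preference list of acceptable CUs and a capacity. -/
structure Market where
  numCU : ℕ
  numUB : ℕ
  cuPref : ℕ → List ℕ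
  ubPref : ℕ → List ℕ
  cap : ℕ → ℕ

namespace Market

variable (M : Market)

/-- Rank of UB `u` in CU `c`'s preference list (smaller = better). -/
def cuRank (c u : ℕ) : ℕ := (M.cuPref c).idxOf u

/-- Rank of CU `c` in UB `u`'s preference list (smaller = better). -/
def ubRank (u c : ℕ) : ℕ := (M.ubPref u).idxOf c

/-- The set of CUs assigned to UB `u` under assignment `μ`. -/
def assignedSet (μ : ℕ → Option ℕ) (u : ℕ) : Finset ℕ :=
  (Finset.range M.numCU).filter (fun c => μ c = some u)

/-- `μ` is a matching: only genuine CUs are matched, capacities respected. -/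
def IsMatching (μ : ℕ → Option ℕ) : Prop :=
  (∀ c, M.numCU ≤ c → μ c = none) ∧ ∀ u, (M.assignedSet μ u).card ≤ M.cap u

/-- Individual rationality: every matched pair is mutually acceptable. -/
def IndivRational (μ : ℕ → Option ℕ) : Prop :=
  ∀ c u, μ c = some u → u ∈ M.cuPref c ∧ c ∈ M.ubPref u

/-- `(c, u)` is a blocking pair of `μ`. -/
def BlockingPair (μ : ℕ → Option ℕ) (c u : ℕ) : Prop :=
  c < M.numCU ∧ u ∈ M.cuPref c ∧ c ∈ M.ubPref u ∧
  (∀ u', μ c = some u' → M.cuRank c u < M.cuRank c u') ∧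
  ((M.assignedSet μ u).card < M.cap u ∨
    ∃ c' ∈ M.assignedSet μ u, M.ubRank u c < M.ubRank u c')

/-- Stability: a matching, individually rational, with no blocking pair. -/
def Stable (μ : ℕ → Option ℕ) : Prop :=
  M.IsMatching μ ∧ M.IndivRational μ ∧ ∀ c u, ¬ M.BlockingPair μ c u

/-- State of the deferred-acceptance algorithm: the remaining (not yet
proposed-to) part of every CU's list and the current tentative assignment. -/
structure DAState where
  rem : ℕ → List ℕ
  asg : ℕ → Option ℕ

/-- Initial state: full preference lists, nobody matched. -/
def initState : DAState := ⟨M.cuPref, fun _ => none⟩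

/-- CU `c` proposes to the top UB remaining on its list; that UB tentatively
retains the best acceptable proposers/holders up to capacity. -/
def daStepAt (c : ℕ) (s : DAState) : DAState :=
  match s.rem c with
  | [] => s
  | u :: rest =>
    let rem' := fun c' => if c' = c then rest else s.rem c'
    if c ∈ M.ubPref u then
      let contenders := (M.ubPref u).filter (fun c' => decide (s.asg c' = some u) || (c' == c))
      let kept := contenders.take (M.cap u)
      let asg' := fun c' =>
        if c' ∈ kept then some u
        else if s.asg c' = some u ∨ c' = c then none
        else s.asg c'
      ⟨rem', asg'⟩
    else ⟨rem', s.asg⟩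

/-- One step of (deterministic) deferred acceptance: the first unmatched CU
with a nonempty remaining list proposes. -/
def daStep (s : DAState) : DAState :=
  match (List.range M.numCU).find? (fun c => (s.asg c).isNone && !(s.rem c).isEmpty) with
  | none => s
  | some c => M.daStepAt c s

/-- Iterate the deferred-acceptance step `n` times. -/
def daRun (M : Market) : ℕ → DAState → DAState
  | 0, s => s
  | n + 1, s => daRun M n (M.daStep s)

/-- Fuel certainly sufficient for termination: total length of all lists. -/
def daFuel : ℕ := ((List.range M.numCU).map (fun c => (M.cuPref c).length)).sum + 1

/-- The matching produced by the CU-proposing deferred-acceptance algorithm. -/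
def DA : ℕ → Option ℕ := (M.daRun M.daFuel M.initState).asg

end Market


namespace DAaux
open List

lemma idxOf_lt_of_mem_take {l : List ℕ} {y : ℕ} {n : ℕ} (h : y ∈ l.take n) :
    l.idxOf y < n := by
  induction l generalizing n with
  | nil => simp at h
  | cons a t ih =>
    cases n with
    | zero => simp at h
    | succ n =>
      rw [List.take_succ_cons] at h
      by_cases hy : y = a
      · subst hy; rw [List.idxOf_cons_self]; omega
      · rcases List.mem_cons.mp h with h | h
        · exact absurd h hy
        · rw [List.idxOf_cons_ne _ (Ne.symm hy)]
          exact Nat.succ_lt_succ (ih h)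

lemma not_mem_take_idxOf (l : List ℕ) (c : ℕ) : c ∉ l.take (l.idxOf c) := by
  intro h
  exact absurd (idxOf_lt_of_mem_take h) (lt_irrefl _)

lemma kept_sublist {l : List ℕ} {p : ℕ → Bool} {k m : ℕ}
    (h : k ≤ (l.take m).countP p) :
    ((l.filter p).take k) <+ (l.take m) ∧ ((l.filter p).take k).length = k := by
  have hsplit : l.filter p = (l.take m).filter p ++ (l.drop m).filter p := by
    rw [← List.filter_append, List.take_append_drop]
  have hlen : ((l.take m).filter p).length = (l.take m).countP p :=
    List.countP_eq_length_filter.symm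
  have hk : k ≤ ((l.take m).filter p).length := by omega
  constructor
  · rw [hsplit, List.take_append_of_le_length hk]
    exact (List.take_sublist _ _).trans List.filter_sublist
  · rw [hsplit, List.take_append_of_le_length hk, List.length_take]
    omega

lemma count_ge_of_not_kept {l : List ℕ} {p : ℕ → Bool} {k : ℕ} {c : ℕ}
    (hc : c ∈ l) (hpc : p c = true) (hck : c ∉ (l.filter p).take k) :
    k ≤ (l.take (l.idxOf c)).countP p := by
  by_contra h
  push_neg at h
  set m := l.idxOf c with hm_def
  have hm : m < l.length := List.idxOf_lt_length_iff.mpr hc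
  have hdrop : l.drop m = c :: l.drop (m+1) := by
    rw [List.drop_eq_getElem_cons hm, List.getElem_idxOf hm]
  have hsplit : l.filter p = (l.take m).filter p ++ (c :: (l.drop (m+1)).filter p) := by
    conv_lhs => rw [← List.take_append_drop m l]
    rw [List.filter_append, hdrop, List.filter_cons_of_pos hpc]
  apply hck
  rw [hsplit, List.take_append]
  have hlen : ((l.take m).filter p).length = (l.take m).countP p :=
    List.countP_eq_length_filter.symm
  have h1 : 1 ≤ k - ((l.take m).filter p).length := by omega
  apply List.mem_append_right
  obtain ⟨j, hj⟩ := Nat.exists_eq_add_of_le h1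
  rw [hj, Nat.add_comm, List.take_succ_cons]
  exact List.mem_cons_self

end DAaux




namespace Market
variable (M : Market)

/-- Every assigned CU is on its UB's preference list. -/
def Listed (s : DAState) : Prop := ∀ x w, s.asg x = some w → x ∈ M.ubPref w

/-- The key invariant after `c` has been rejected by `u`. -/
def Inv (c u : ℕ) (s : DAState) : Prop :=
  s.asg c ≠ some u ∧
  (∀ x, s.asg x = some u → M.ubRank u x < M.ubRank u c) ∧
  M.cap u ≤ ((M.ubPref u).take (M.ubRank u c)).countP
      (fun x => decide (s.asg x = some u))

lemma daStepAt_asg_of_mem (c₀ : ℕ) (s : DAState) {v : ℕ} {rest : List ℕ}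
    (hrem : s.rem c₀ = v :: rest) (hmem : c₀ ∈ M.ubPref v) :
    (M.daStepAt c₀ s).asg = fun c' =>
      if c' ∈ ((M.ubPref v).filter
          (fun c'' => decide (s.asg c'' = some v) || (c'' == c₀))).take (M.cap v)
        then some v
      else if s.asg c' = some v ∨ c' = c₀ then none
      else s.asg c' := by
  unfold daStepAt
  rw [hrem]
  simp [hmem]

lemma daStepAt_asg_of_not_mem (c₀ : ℕ) (s : DAState) {v : ℕ} {rest : List ℕ}
    (hrem : s.rem c₀ = v :: rest) (hmem : c₀ ∉ M.ubPref v) :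
    (M.daStepAt c₀ s).asg = s.asg := by
  unfold daStepAt
  rw [hrem]
  simp [hmem]

lemma daStepAt_rem (c₀ : ℕ) (s : DAState) {v : ℕ} {rest : List ℕ}
    (hrem : s.rem c₀ = v :: rest) :
    (M.daStepAt c₀ s).rem = fun c' => if c' = c₀ then rest else s.rem c' := by
  unfold daStepAt
  rw [hrem]
  by_cases hmem : c₀ ∈ M.ubPref v <;> simp [hmem]

lemma daRun_add (a b : ℕ) (s : DAState) :
    M.daRun (a + b) s = M.daRun b (M.daRun a s) := by
  induction a generalizing s with
  | zero => simp [daRun]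
  | succ a ih =>
      have : a + 1 + b = (a + b) + 1 := by omega
      rw [this]
      show M.daRun (a+b) (M.daStep s) = _
      rw [ih, daRun]

lemma daRun_fix {s : DAState} (h : M.daStep s = s) (k : ℕ) : M.daRun k s = s := by
  induction k with
  | zero => rfl
  | succ k ih => rw [daRun, h, ih]

lemma daStep_daRun (k : ℕ) (s : DAState) :
    M.daRun k (M.daStep s) = M.daStep (M.daRun k s) := by
  induction k generalizing s with
  | zero => rfl
  | succ k ih => rw [daRun, daRun, ih]

end Market


namespace Market
variable (M : Market)

lemma daStepAt_nil (c₀ : ℕ) {s : DAState} (hrem : s.rem c₀ = []) :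
    M.daStepAt c₀ s = s := by
  unfold daStepAt; rw [hrem]

lemma daStep_none {s : DAState}
    (hfind : (List.range M.numCU).find?
      (fun c => (s.asg c).isNone && !(s.rem c).isEmpty) = none) :
    M.daStep s = s := by
  unfold daStep; rw [hfind]

lemma daStep_some {s : DAState} {c₀ : ℕ}
    (hfind : (List.range M.numCU).find?
      (fun c => (s.asg c).isNone && !(s.rem c).isEmpty) = some c₀) :
    M.daStep s = M.daStepAt c₀ s := by
  unfold daStep; rw [hfind]

lemma find?_spec {s : DAState} {c₀ : ℕ}
    (hfind : (List.range M.numCU).find?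
      (fun c => (s.asg c).isNone && !(s.rem c).isEmpty) = some c₀) :
    s.asg c₀ = none ∧ s.rem c₀ ≠ [] ∧ c₀ < M.numCU := by
  have h1 := List.find?_some hfind
  have h2 := List.mem_of_find?_eq_some hfind
  simp at h1 h2
  exact ⟨h1.1, by simpa using h1.2, h2⟩

lemma Listed_stepAt {s : DAState} (hL : M.Listed s) (c₀ : ℕ) :
    M.Listed (M.daStepAt c₀ s) := by
  cases hrem : s.rem c₀ with
  | nil => rw [M.daStepAt_nil c₀ hrem]; exact hL
  | cons v rest =>
    by_cases hmem : c₀ ∈ M.ubPref v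
    · intro x w hx
      rw [M.daStepAt_asg_of_mem c₀ s hrem hmem] at hx
      simp only at hx
      split_ifs at hx with hx1 hx2
      · obtain rfl : v = w := by injection hx
        have := (List.take_sublist _ _).subset hx1
        exact (List.mem_filter.mp this).1
      · exact hL x w hx
    · intro x w hx
      rw [M.daStepAt_asg_of_not_mem c₀ s hrem hmem] at hx
      exact hL x w hx

lemma Listed_step {s : DAState} (hL : M.Listed s) : M.Listed (M.daStep s) := by
  cases hfind : (List.range M.numCU).find?
      (fun c => (s.asg c).isNone && !(s.rem c).isEmpty) with
  | none => rw [M.daStep_none hfind]; exact hL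
  | some c₀ => rw [M.daStep_some hfind]; exact M.Listed_stepAt hL c₀

lemma Listed_run (n : ℕ) : M.Listed (M.daRun n M.initState) := by
  have key : ∀ (k : ℕ) (s : DAState), M.Listed s → M.Listed (M.daRun k s) := by
    intro k
    induction k with
    | zero => intro s hs; exact hs
    | succ k ih => intro s hs; exact ih _ (M.Listed_step hs)
  exact key n _ (by intro x w hx; simp [initState] at hx)

end Market


namespace Market
variable (M : Market)

lemma Inv_of_cnt {c u c₀ : ℕ} {s : DAState} {rest : List ℕ}
    (hrem : s.rem c₀ = u :: rest) (hmem : c₀ ∈ M.ubPref u)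
    (hcnt : M.cap u ≤ ((M.ubPref u).take (M.ubRank u c)).countP
        (fun c'' => decide (s.asg c'' = some u) || (c'' == c₀))) :
    M.Inv c u (M.daStepAt c₀ s) := by
  set ct : List ℕ := (M.ubPref u).filter
      (fun c'' => decide (s.asg c'' = some u) || (c'' == c₀)) with hct
  set kp : List ℕ := ct.take (M.cap u) with hkp
  have hA : ∀ x, (M.daStepAt c₀ s).asg x =
      if x ∈ kp then some u
      else if s.asg x = some u ∨ x = c₀ then none
      else s.asg x := fun x =>
    congrFun (M.daStepAt_asg_of_mem c₀ s hrem hmem) x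
  obtain ⟨hsub, hlen⟩ := DAaux.kept_sublist hcnt
  have hkp_lt : ∀ x ∈ kp, M.ubRank u x < M.ubRank u c := by
    intro x hx
    exact DAaux.idxOf_lt_of_mem_take (hsub.subset hx)
  have hckp : c ∉ kp := by
    intro hcm
    exact DAaux.not_mem_take_idxOf (M.ubPref u) c (hsub.subset hcm)
  have hiff : ∀ x, (M.daStepAt c₀ s).asg x = some u ↔ x ∈ kp := by
    intro x
    rw [hA x]
    split_ifs with hx1 hx2
    · simp [hx1]
    · simp [hx1]
    · constructor
      · intro hxx; exact absurd (Or.inl hxx) hx2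
      · intro hxx; exact absurd hxx hx1
  refine ⟨?_, ?_, ?_⟩
  · intro hcc; exact hckp ((hiff c).mp hcc)
  · intro x hx; exact hkp_lt x ((hiff x).mp hx)
  · calc M.cap u = kp.length := hlen.symm
      _ = kp.countP (fun y => decide ((M.daStepAt c₀ s).asg y = some u)) := by
          rw [List.countP_eq_length.mpr]
          intro a ha
          simpa using (hiff a).mpr ha
      _ ≤ ((M.ubPref u).take (M.ubRank u c)).countP
          (fun y => decide ((M.daStepAt c₀ s).asg y = some u)) :=
        hsub.countP_le

lemma Inv_stepAt {c u : ℕ} {s : DAState} (c₀ : ℕ) (hc₀ : s.asg c₀ = none)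
    (hI : M.Inv c u s) : M.Inv c u (M.daStepAt c₀ s) := by
  obtain ⟨h1, h2, h3⟩ := hI
  cases hrem : s.rem c₀ with
  | nil => rw [M.daStepAt_nil c₀ hrem]; exact ⟨h1, h2, h3⟩
  | cons v rest =>
    by_cases hmem : c₀ ∈ M.ubPref v
    · set ct : List ℕ := (M.ubPref v).filter
        (fun c'' => decide (s.asg c'' = some v) || (c'' == c₀)) with hct
      set kp : List ℕ := ct.take (M.cap v) with hkp
      have hA : ∀ x, (M.daStepAt c₀ s).asg x =
          if x ∈ kp then some v
          else if s.asg x = some v ∨ x = c₀ then none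
          else s.asg x := fun x =>
        congrFun (M.daStepAt_asg_of_mem c₀ s hrem hmem) x
      have hkp_pred : ∀ x ∈ kp, s.asg x = some v ∨ x = c₀ := by
        intro x hx
        have := (List.mem_filter.mp ((List.take_sublist _ _).subset hx)).2
        simpa using this
      by_cases hvu : v = u
      · subst hvu
        refine M.Inv_of_cnt hrem hmem (le_trans h3 (List.countP_mono_left ?_))
        intro a _ hpa
        simp only [Bool.or_eq_true]
        exact Or.inl hpa
      · -- proposal round at some other UB v ≠ u
        have hiff : ∀ x, (M.daStepAt c₀ s).asg x = some u ↔ s.asg x = some u := by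
          intro x
          rw [hA x]
          split_ifs with hx1 hx2
          · constructor
            · intro hxx
              exact absurd (by injection hxx) hvu
            · intro hxx
              rcases hkp_pred x hx1 with h | h
              · rw [hxx] at h
                injection h with h'
                exact absurd h'.symm hvu
              · rw [h, hc₀] at hxx; exact nomatch hxx
          · constructor
            · intro hxx; exact hxx.elim
            · intro hxx
              rcases hx2 with h | h
              · rw [hxx] at h
                injection h with h'
                exact absurd h'.symm hvu
              · rw [h, hc₀] at hxx; exact nomatch hxx
          · exact Iff.rfl
        refine ⟨?_, ?_, ?_⟩
        · intro hcc; exact h1 ((hiff c).mp hcc)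
        · intro x hx; exact h2 x ((hiff x).mp hx)
        · refine le_trans h3 (le_of_eq (List.countP_congr ?_))
          intro a _
          simpa using (hiff a).symm
    · unfold Inv
      rw [M.daStepAt_asg_of_not_mem c₀ s hrem hmem]
      exact ⟨h1, h2, h3⟩

lemma Inv_step {c u : ℕ} {s : DAState} (hI : M.Inv c u s) :
    M.Inv c u (M.daStep s) := by
  cases hfind : (List.range M.numCU).find?
      (fun c => (s.asg c).isNone && !(s.rem c).isEmpty) with
  | none => rw [M.daStep_none hfind]; exact hI
  | some c₀ =>
      rw [M.daStep_some hfind]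
      exact M.Inv_stepAt c₀ (M.find?_spec hfind).1 hI

lemma Inv_run {c u : ℕ} {s : DAState} (hI : M.Inv c u s) (k : ℕ) :
    M.Inv c u (M.daRun k s) := by
  induction k generalizing s with
  | zero => exact hI
  | succ k ih => exact ih (M.Inv_step hI)

end Market


namespace Market
variable (M : Market)

/-- Total remaining list length: the termination measure. -/
def mu (s : DAState) : ℕ :=
  ((List.range M.numCU).map (fun c => (s.rem c).length)).sum

lemma mu_eq_sum (s : DAState) :
    M.mu s = ∑ x ∈ Finset.range M.numCU, (s.rem x).length := rfl

lemma mu_step {s : DAState} {c₀ : ℕ}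
    (hfind : (List.range M.numCU).find?
      (fun c => (s.asg c).isNone && !(s.rem c).isEmpty) = some c₀) :
    M.mu (M.daStep s) + 1 = M.mu s := by
  obtain ⟨hasg, hnil, hlt⟩ := M.find?_spec hfind
  rw [M.daStep_some hfind]
  cases hrem : s.rem c₀ with
  | nil => exact absurd hrem hnil
  | cons v rest =>
    have hrem' := M.daStepAt_rem c₀ s hrem
    have hmem : c₀ ∈ Finset.range M.numCU := Finset.mem_range.mpr hlt
    rw [mu_eq_sum, mu_eq_sum, hrem']
    rw [Finset.sum_eq_add_sum_sdiff_singleton_of_mem hmem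
      (fun x => (s.rem x).length)]
    have : ∀ x, ((fun c' => if c' = c₀ then rest else s.rem c') x).length
        = Function.update (fun c => (s.rem c).length) c₀ rest.length x := by
      intro x
      rw [Function.update_apply]
      by_cases hx : x = c₀ <;> simp [hx]
    rw [Finset.sum_congr rfl (fun x _ => this x),
      Finset.sum_update_of_mem hmem]
    rw [hrem]
    simp [List.length_cons]
    omega

lemma mu_pos {s : DAState} {c₀ : ℕ}
    (hfind : (List.range M.numCU).find?
      (fun c => (s.asg c).isNone && !(s.rem c).isEmpty) = some c₀) :
    1 ≤ M.mu s := by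
  obtain ⟨hasg, hnil, hlt⟩ := M.find?_spec hfind
  have hmem : c₀ ∈ Finset.range M.numCU := Finset.mem_range.mpr hlt
  have h1 : 1 ≤ (s.rem c₀).length := by
    cases h : s.rem c₀ with
    | nil => exact absurd h hnil
    | cons a l => simp
  calc 1 ≤ (s.rem c₀).length := h1
    _ ≤ M.mu s := by
      rw [mu_eq_sum]
      exact Finset.single_le_sum (f := fun x => (s.rem x).length) (fun i _ => Nat.zero_le _) hmem

lemma lt_mu_of_find? {n : ℕ} {c' : ℕ} : ∀ {s : DAState},
    (List.range M.numCU).find?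
      (fun c => ((M.daRun n s).asg c).isNone && !((M.daRun n s).rem c).isEmpty)
      = some c' →
    n < M.mu s := by
  induction n with
  | zero => intro s h; exact M.mu_pos h
  | succ n ih =>
    intro s h
    cases hf : (List.range M.numCU).find?
        (fun c => (s.asg c).isNone && !(s.rem c).isEmpty) with
    | none =>
      exfalso
      have hfix : M.daStep s = s := M.daStep_none hf
      have : M.daRun (n + 1) s = s := M.daRun_fix hfix _
      rw [this] at h
      rw [h] at hf
      exact nomatch hf
    | some c₁ =>
      have hstep : M.daRun (n + 1) s = M.daRun n (M.daStep s) := rfl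
      rw [hstep] at h
      have := ih h
      have hmu := M.mu_step hf
      omega

end Market


/-- CU `c` is rejected by UB `u` at step `n` of deferred acceptance: before
the step `c` is held by `u`, or `c` is the current proposer and `u` is the
UB it proposes to, and after the step `c` is not assigned to `u`. -/
def Market.RejectedAt (M : Market) (c u n : ℕ) : Prop :=
  ((M.daRun n M.initState).asg c = some u ∨
    ((List.range M.numCU).find?
        (fun c' => ((M.daRun n M.initState).asg c').isNone
          && !((M.daRun n M.initState).rem c').isEmpty) = some c ∧
      ((M.daRun n M.initState).rem c).head? = some u)) ∧
  (M.daStep (M.daRun n M.initState)).asg c ≠ some u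

namespace Market
variable (M : Market)

lemma rejected_find? {c u n : ℕ} (hrej : M.RejectedAt c u n) :
    ∃ c₀, (List.range M.numCU).find?
      (fun c' => ((M.daRun n M.initState).asg c').isNone
        && !((M.daRun n M.initState).rem c').isEmpty) = some c₀ := by
  obtain ⟨hin, hne⟩ := hrej
  cases hfind : (List.range M.numCU).find?
      (fun c' => ((M.daRun n M.initState).asg c').isNone
        && !((M.daRun n M.initState).rem c').isEmpty) with
  | none =>
    exfalso
    have hstep := M.daStep_none hfind
    rcases hin with h | ⟨hf, _⟩
    · rw [hstep] at hne; exact hne h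
    · rw [hfind] at hf; exact nomatch hf
  | some c₀ => exact ⟨c₀, rfl⟩

lemma Inv_establish {c u n : ℕ} (hrej : M.RejectedAt c u n)
    (hc : c ∈ M.ubPref u) :
    M.Inv c u (M.daStep (M.daRun n M.initState)) := by
  obtain ⟨c₀, hfind⟩ := M.rejected_find? hrej
  obtain ⟨hin, hne⟩ := hrej
  set s := M.daRun n M.initState with hs
  obtain ⟨hasg₀, hnil, hlt₀⟩ := M.find?_spec hfind
  have hstep : M.daStep s = M.daStepAt c₀ s := M.daStep_some hfind
  rw [hstep] at hne ⊢
  cases hrem : s.rem c₀ with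
  | nil => exact absurd hrem hnil
  | cons v rest =>
    by_cases hmem : c₀ ∈ M.ubPref v
    case neg =>
      exfalso
      have hAeq := M.daStepAt_asg_of_not_mem c₀ s hrem hmem
      rcases hin with h | ⟨hf, hhead⟩
      · rw [hAeq] at hne; exact hne h
      · have hcc : c = c₀ := by
          rw [hfind] at hf; injection hf with h'; exact h'.symm
        subst hcc
        rw [hrem] at hhead
        rw [List.head?_cons] at hhead
        have hvu : v = u := by injection hhead
        subst hvu
        exact hmem hc
    case pos =>
      have hA : ∀ x, (M.daStepAt c₀ s).asg x =
          if x ∈ ((M.ubPref v).filter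
              (fun c'' => decide (s.asg c'' = some v) || (c'' == c₀))).take (M.cap v)
            then some v
          else if s.asg x = some v ∨ x = c₀ then none
          else s.asg x := fun x =>
        congrFun (M.daStepAt_asg_of_mem c₀ s hrem hmem) x
      have hvu : u = v := by
        rcases hin with h | ⟨hf, hhead⟩
        · by_contra hvu'
          have hvu : ¬ v = u := fun h' => hvu' h'.symm
          apply hne
          rw [hA c]
          have hnkp : c ∉ ((M.ubPref v).filter
              (fun c'' => decide (s.asg c'' = some v) || (c'' == c₀))).take (M.cap v) := by
            intro hk
            have := (List.mem_filter.mp ((List.take_sublist _ _).subset hk)).2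
            simp only [Bool.or_eq_true, decide_eq_true_eq, beq_iff_eq] at this
            rcases this with h' | h'
            · rw [h] at h'
              have : u = v := by injection h'
              exact hvu this.symm
            · rw [h'] at h; rw [hasg₀] at h; exact nomatch h
          rw [if_neg hnkp, if_neg]
          · exact h
          · rintro (h' | h')
            · rw [h] at h'
              have : u = v := by injection h'
              exact hvu this.symm
            · rw [h'] at h; rw [hasg₀] at h; exact nomatch h
        · have hcc : c = c₀ := by rw [hfind] at hf; injection hf with h'; exact h'.symm
          subst hcc
          rw [hrem, List.head?_cons] at hhead
          injection hhead with h'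
          exact h'.symm
      subst hvu
      have hpc : (decide (s.asg c = some u) || (c == c₀)) = true := by
        rcases hin with h | ⟨hf, hhead⟩
        · simp [h]
        · have hcc : c = c₀ := by rw [hfind] at hf; injection hf with h'; exact h'.symm
          simp [hcc]
      have hckp : c ∉ ((M.ubPref u).filter
          (fun c'' => decide (s.asg c'' = some u) || (c'' == c₀))).take (M.cap u) := by
        intro hk
        apply hne
        rw [hA c, if_pos hk]
      have hcnt := DAaux.count_ge_of_not_kept hc hpc hckp
      exact M.Inv_of_cnt hrem hmem hcnt

end Market


/-- if `c` is rejected by `u` at some step, then in the final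
matching `u` does not hold `c`; every CU held by `u` just after the rejection
is strictly preferred by `u` to `c`; and at termination, whenever `u` is
full, every CU it holds is strictly preferred to `c`. -/
theorem DA_rejected_never_matched (M : Market) (c u n : ℕ)
    (hrej : M.RejectedAt c u n) :
    M.DA c ≠ some u ∧
    (∀ c' ∈ M.assignedSet (M.daStep (M.daRun n M.initState)).asg u,
      M.ubRank u c' < M.ubRank u c) ∧
    ((M.assignedSet M.DA u).card = M.cap u →
      ∀ c' ∈ M.assignedSet M.DA u, M.ubRank u c' < M.ubRank u c) := by
  obtain ⟨c₀, hfind⟩ := M.rejected_find? hrej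
  have hstep : M.daStep (M.daRun n M.initState) = M.daRun (n+1) M.initState := by
    rw [show M.daRun (n+1) M.initState = M.daRun n (M.daStep M.initState) from rfl,
        M.daStep_daRun]
  have hn : n < M.mu M.initState := M.lt_mu_of_find? hfind
  have hfuel : M.daFuel = (n + 1) + (M.daFuel - (n + 1)) := by
    have : M.daFuel = M.mu M.initState + 1 := rfl
    omega
  have hDA : M.DA
      = (M.daRun (M.daFuel - (n+1)) (M.daStep (M.daRun n M.initState))).asg := by
    rw [hstep]
    show (M.daRun M.daFuel M.initState).asg = _
    rw [hfuel, M.daRun_add]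
    simp only [Nat.add_sub_cancel_left]
  by_cases hc : c ∈ M.ubPref u
  · have hInv1 := M.Inv_establish hrej hc
    have hInvF := M.Inv_run hInv1 (M.daFuel - (n+1))
    refine ⟨?_, ?_, ?_⟩
    · rw [hDA]; exact hInvF.1
    · intro c' hc'
      exact hInv1.2.1 c' (Finset.mem_filter.mp hc').2
    · intro _ c' hc'
      have h := (Finset.mem_filter.mp hc').2
      rw [hDA] at h
      exact hInvF.2.1 c' h
  · have hrank : M.ubRank u c = (M.ubPref u).length := List.idxOf_eq_length_iff.mpr hc
    have hL1 : M.Listed (M.daStep (M.daRun n M.initState)) :=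
      M.Listed_step (M.Listed_run n)
    have hLF : M.Listed (M.daRun M.daFuel M.initState) := M.Listed_run _
    refine ⟨?_, ?_, ?_⟩
    · intro h; exact hc (hLF c u h)
    · intro c' hc'
      have hm := hL1 c' u (Finset.mem_filter.mp hc').2
      rw [hrank]
      exact List.idxOf_lt_length_iff.mpr hm
    · intro _ c' hc'
      have hm := hLF c' u (Finset.mem_filter.mp hc').2
      rw [hrank]
      exact List.idxOf_lt_length_iff.mpr hm
end

section
/- The CU-proposing deferred acceptance algorithm with incomplete lists produces the same matching regardless of the order in which unmatched CUs propose (order-independence of deferred acceptance). -/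
/-- `c` is a legal next proposer in state `s`. -/
def Market.ValidChoice (M : Market) (s : Market.DAState) (c : ℕ) : Prop :=
  c < M.numCU ∧ s.asg c = none ∧ s.rem c ≠ []

/-- Run deferred acceptance with an explicit sequence of proposer choices. -/
def Market.runChoices (M : Market) : List ℕ → Market.DAState → Market.DAState
  | [], s => s
  | c :: cs, s => Market.runChoices M cs (M.daStepAt c s)

/-- Every choice in the list is legal at the state where it is made. -/
def Market.ValidRun (M : Market) : List ℕ → Market.DAState → Prop
  | [], _ => True
  | c :: cs, s => M.ValidChoice s c ∧ Market.ValidRun M cs (M.daStepAt c s)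

/-- Terminal state: every CU is matched or has exhausted its list. -/
def Market.Terminal (M : Market) (s : Market.DAState) : Prop :=
  ∀ c < M.numCU, s.asg c ≠ none ∨ s.rem c = []

namespace DAProof

open Market

/-- Path independence of top-k selection (the key combinatorial lemma). -/
theorem filter_take_PI (p r : ℕ → Bool) (K : List ℕ)
    (hK : ∀ x ∈ K, p x = true) :
    ∀ (L : List ℕ) (k : ℕ), (∀ x ∈ (L.filter p).take k, x ∈ K) →
      (L.filter (fun x => decide (x ∈ K) || r x)).take k
        = (L.filter (fun x => p x || r x)).take k := by
  intro L
  induction L with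
  | nil => intro k _; rfl
  | cons a L ih =>
    intro k hk
    by_cases hpa : p a = true
    · by_cases haK : a ∈ K
      · have h1 : (decide (a ∈ K) || r a) = true := by simp [haK]
        have h2 : (p a || r a) = true := by simp [hpa]
        simp only [List.filter_cons, h1, if_true]
        rw [show ((p a || r a) = true) from h2]
        simp only [if_true]
        cases k with
        | zero => simp
        | succ k' =>
          rw [List.take_succ_cons, List.take_succ_cons]
          congr 1
          apply ih
          intro x hx
          apply hk
          simp only [List.filter_cons]
          rw [if_pos hpa, List.take_succ_cons]
          exact List.mem_cons_of_mem _ hx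
      · have hk0 : k = 0 := by
          by_contra h
          obtain ⟨k', rfl⟩ := Nat.exists_eq_succ_of_ne_zero h
          apply haK
          apply hk
          rw [List.filter_cons_of_pos hpa, List.take_succ_cons]
          exact List.mem_cons_self
        subst hk0; simp
    · have haK : a ∉ K := fun h => hpa (hK a h)
      have hfp : List.filter p (a :: L) = List.filter p L := by
        simp only [List.filter_cons]
        rw [if_neg (by simpa using hpa)]
      by_cases hra : r a = true
      · have h1 : (decide (a ∈ K) || r a) = true := by simp [hra]
        have h2 : (p a || r a) = true := by simp [hra]
        simp only [List.filter_cons, h1, if_true]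
        rw [show ((p a || r a) = true) from h2]
        simp only [if_true]
        cases k with
        | zero => simp
        | succ k' =>
          rw [List.take_succ_cons, List.take_succ_cons]
          congr 1
          apply ih
          intro x hx
          apply hk
          rw [hfp]
          have : x ∈ List.take (k' + 1) (List.filter p L) := by
            have h3 : List.take k' (List.filter p L)
                = List.take k' (List.take (k' + 1) (List.filter p L)) := by
              rw [List.take_take]; congr 1; omega
            rw [h3] at hx
            exact List.mem_of_mem_take hx
          exact this
      · have h1 : (decide (a ∈ K) || r a) = false := by simp [haK, hra]
        have h2 : (p a || r a) = false := by
          simp [hra]; simpa using hpa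
        simp only [List.filter_cons, h1, h2, if_false, Bool.false_eq_true]
        apply ih
        intro x hx
        apply hk
        rw [hfp]; exact hx

variable {M : Market}

/-- The retained list at UB `u` when assignment is `a` and `c` proposes. -/
def kept (M : Market) (u : ℕ) (a : ℕ → Option ℕ) (c : ℕ) : List ℕ :=
  ((M.ubPref u).filter (fun x => decide (a x = some u) || (x == c))).take (M.cap u)

theorem stepAt_rem (c : ℕ) (s : Market.DAState) :
    (M.daStepAt c s).rem = fun y => if y = c then (s.rem c).tail else s.rem y := by
  funext y
  unfold Market.daStepAt
  rcases h : s.rem c with _ | ⟨u, rest⟩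
  · by_cases hy : y = c <;> simp [hy, h]
  · by_cases hacc : c ∈ M.ubPref u <;> simp [hacc]

theorem stepAt_asg_acc {c u : ℕ} {rest : List ℕ} {s : Market.DAState}
    (h : s.rem c = u :: rest) (hacc : c ∈ M.ubPref u) :
    (M.daStepAt c s).asg = fun x =>
      if x ∈ kept M u s.asg c then some u
      else if s.asg x = some u ∨ x = c then none
      else s.asg x := by
  unfold Market.daStepAt
  rw [h]
  simp [hacc, kept]
  rfl

theorem stepAt_asg_unacc {c u : ℕ} {rest : List ℕ} {s : Market.DAState}
    (h : s.rem c = u :: rest) (hacc : c ∉ M.ubPref u) :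
    (M.daStepAt c s).asg = s.asg := by
  unfold Market.daStepAt
  rw [h]
  simp [hacc]

theorem stepAt_asg_congr {c : ℕ} {s t : Market.DAState}
    (ha : s.asg = t.asg) (hr : s.rem c = t.rem c) :
    (M.daStepAt c s).asg = (M.daStepAt c t).asg := by
  unfold Market.daStepAt
  rw [hr, ha]
  rcases h : t.rem c with _ | ⟨u, rest⟩
  · exact ha
  · by_cases hacc : c ∈ M.ubPref u <;> simp [hacc, ha]

theorem mem_kept {u : ℕ} {a : ℕ → Option ℕ} {c x : ℕ}
    (hx : x ∈ kept M u a c) : a x = some u ∨ x = c := by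
  have := List.mem_of_mem_take hx
  have := List.of_mem_filter this
  simpa using this

theorem stepAt_asg_u_iff {c u : ℕ} {rest : List ℕ} {s : Market.DAState}
    (h : s.rem c = u :: rest) (hacc : c ∈ M.ubPref u) (x : ℕ) :
    (M.daStepAt c s).asg x = some u ↔ x ∈ kept M u s.asg c := by
  rw [stepAt_asg_acc h hacc]
  by_cases hx : x ∈ kept M u s.asg c
  · simp [hx]
  · simp only [hx, if_false]
    constructor
    · intro hh
      by_cases hc : s.asg x = some u ∨ x = c
      · simp [hc] at hh
      · simp [hc] at hh
        exact absurd hh.symm (by tauto)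
    · intro hh; exact hh.elim

theorem stepAt_asg_v_iff {c u v : ℕ} {rest : List ℕ} {s : Market.DAState}
    (h : s.rem c = u :: rest) (hc : s.asg c = none) (hv : v ≠ u) (x : ℕ) :
    ((M.daStepAt c s).asg x = some v ↔ s.asg x = some v) := by
  by_cases hacc : c ∈ M.ubPref u
  · rw [stepAt_asg_acc h hacc]
    by_cases hx : x ∈ kept M u s.asg c
    · simp only [hx, if_true]
      rcases mem_kept hx with h1 | h1
      · constructor
        · intro hh; exact absurd (Option.some.inj hh) (by tauto)
        · intro hh; rw [hh] at h1; exact absurd (Option.some.inj h1) hv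
      · subst h1
        constructor
        · intro hh; exact absurd (Option.some.inj hh) (by tauto)
        · intro hh; rw [hc] at hh; cases hh
    · simp only [hx, if_false]
      by_cases hcc : s.asg x = some u ∨ x = c
      · simp only [hcc, if_true]
        constructor
        · intro hh; cases hh
        · intro hh
          rcases hcc with h1 | h1
          · rw [hh] at h1; exact absurd (Option.some.inj h1) hv
          · subst h1; rw [hc] at hh; cases hh
      · simp [hcc]
  · rw [stepAt_asg_unacc h hacc]

theorem stepAt_asg_none {c c' : ℕ} {s : Market.DAState}
    (hne : c' ≠ c) (h : s.asg c' = none) :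
    (M.daStepAt c s).asg c' = none := by
  unfold Market.daStepAt
  rcases hr : s.rem c with _ | ⟨u, rest⟩
  · exact h
  · by_cases hacc : c ∈ M.ubPref u
    · simp only [hacc, if_true]
      have hnk : c' ∉ ((M.ubPref u).filter
          (fun x => decide (s.asg x = some u) || (x == c))).take (M.cap u) := by
        intro hmem
        rcases mem_kept (M := M) hmem with h1 | h1
        · rw [h] at h1; cases h1
        · exact hne h1
      simp only [hnk, if_false, h]
      simp [hne]
    · simp [hacc, h]

/-- Retained list when two proposers `c, c'` have both proposed to `u`. -/
def kept2 (M : Market) (u : ℕ) (a : ℕ → Option ℕ) (c c' : ℕ) : List ℕ :=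
  ((M.ubPref u).filter
    (fun x => (decide (a x = some u) || (x == c)) || (x == c'))).take (M.cap u)

theorem kept2_comm (u : ℕ) (a : ℕ → Option ℕ) (c c' : ℕ) :
    kept2 M u a c c' = kept2 M u a c' c := by
  unfold kept2
  congr 1
  apply List.filter_congr
  intro x _
  cases decide (a x = some u) <;> cases (x == c) <;> cases (x == c') <;> rfl

/-- Composite assignment after `c` then `c'` both propose to the same `u`. -/
theorem double_same_u {s : Market.DAState} {c c' u : ℕ} {rest rest' : List ℕ}
    (hne : c ≠ c') (hr : s.rem c = u :: rest) (hr' : s.rem c' = u :: rest')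
    (hac : s.asg c = none) (hac' : s.asg c' = none)
    (hcu : c ∈ M.ubPref u) (hc'u : c' ∈ M.ubPref u) :
    (M.daStepAt c' (M.daStepAt c s)).asg = fun x =>
      if x ∈ kept2 M u s.asg c c' then some u
      else if s.asg x = some u ∨ x = c ∨ x = c' then none
      else s.asg x := by
  set t := M.daStepAt c s with ht
  have htr : t.rem c' = u :: rest' := by
    rw [ht, stepAt_rem]; simp [Ne.symm hne, hr']
  have hta : t.asg = fun x =>
      if x ∈ kept M u s.asg c then some u
      else if s.asg x = some u ∨ x = c then none
      else s.asg x := stepAt_asg_acc hr hcu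
  have hiff : ∀ x, (t.asg x = some u ↔ x ∈ kept M u s.asg c) :=
    stepAt_asg_u_iff hr hcu
  have hkept : kept M u t.asg c' = kept2 M u s.asg c c' := by
    unfold kept kept2
    have h1 : (M.ubPref u).filter (fun x => decide (t.asg x = some u) || (x == c'))
        = (M.ubPref u).filter
            (fun x => decide (x ∈ kept M u s.asg c) || (x == c')) := by
      apply List.filter_congr
      intro x _
      congr 1
      exact decide_eq_decide.mpr (hiff x)
    rw [h1]
    apply filter_take_PI
    · intro x hx
      have := List.of_mem_filter (List.mem_of_mem_take hx)
      exact this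
    · intro x hx
      exact hx
  rw [stepAt_asg_acc htr hc'u, hkept]
  funext x
  by_cases h2 : x ∈ kept2 M u s.asg c c'
  · simp [h2]
  · simp only [h2, if_false]
    by_cases h1 : x ∈ kept M u s.asg c
    · have htx : t.asg x = some u := (hiff x).mpr h1
      rw [if_pos (Or.inl htx)]
      rcases mem_kept h1 with h3 | h3
      · rw [if_pos (Or.inl h3)]
      · rw [if_pos (Or.inr (Or.inl h3))]
    · have htx : t.asg x = if s.asg x = some u ∨ x = c then none else s.asg x := by
        rw [hta]; simp [h1]
      by_cases h3 : x = c'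
      · rw [if_pos (Or.inr h3), if_pos (Or.inr (Or.inr h3))]
      · by_cases h4 : s.asg x = some u ∨ x = c
        · have h5 : t.asg x = none := by rw [htx, if_pos h4]
          rw [if_neg (show ¬(t.asg x = some u ∨ x = c') by rw [h5]; simp [h3]), h5,
            if_pos (by tauto : s.asg x = some u ∨ x = c ∨ x = c')]
        · have h5 : t.asg x = s.asg x := by rw [htx, if_neg h4]
          have h6 : ¬(t.asg x = some u ∨ x = c') := by
            rw [h5]; tauto
          rw [if_neg h6, h5,
            if_neg (by tauto : ¬(s.asg x = some u ∨ x = c ∨ x = c'))]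

/-- Composite assignment after `c` proposes to `u` then `c'` to `u' ≠ u`. -/
theorem double_diff_u {s : Market.DAState} {c c' u u' : ℕ} {rest rest' : List ℕ}
    (hne : c ≠ c') (hr : s.rem c = u :: rest) (hr' : s.rem c' = u' :: rest')
    (hac : s.asg c = none) (hac' : s.asg c' = none)
    (hcu : c ∈ M.ubPref u) (hc'u' : c' ∈ M.ubPref u') (huu : u ≠ u') :
    (M.daStepAt c' (M.daStepAt c s)).asg = fun x =>
      if x ∈ kept M u' s.asg c' then some u'
      else if x ∈ kept M u s.asg c then some u
      else if s.asg x = some u ∨ s.asg x = some u' ∨ x = c ∨ x = c' then none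
      else s.asg x := by
  set t := M.daStepAt c s with ht
  have htr : t.rem c' = u' :: rest' := by
    rw [ht, stepAt_rem]; simp [Ne.symm hne, hr']
  have hta : t.asg = fun x =>
      if x ∈ kept M u s.asg c then some u
      else if s.asg x = some u ∨ x = c then none
      else s.asg x := stepAt_asg_acc hr hcu
  have hiffu : ∀ x, (t.asg x = some u ↔ x ∈ kept M u s.asg c) :=
    stepAt_asg_u_iff hr hcu
  have hiffv : ∀ x, (t.asg x = some u' ↔ s.asg x = some u') :=
    stepAt_asg_v_iff hr hac (Ne.symm huu)
  have hkept : kept M u' t.asg c' = kept M u' s.asg c' := by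
    unfold kept
    congr 1
    apply List.filter_congr
    intro x _
    congr 1
    exact decide_eq_decide.mpr (hiffv x)
  rw [stepAt_asg_acc htr hc'u', hkept]
  funext x
  by_cases hA : x ∈ kept M u' s.asg c'
  · simp [hA]
  · simp only [hA, if_false]
    by_cases hB : x ∈ kept M u s.asg c
    · have htx : t.asg x = some u := (hiffu x).mpr hB
      have hxc' : x ≠ c' := by
        intro h; subst h
        rcases mem_kept hB with h3 | h3
        · rw [hac'] at h3; cases h3
        · exact hne h3.symm
      have h6 : ¬(t.asg x = some u' ∨ x = c') := by
        rw [htx]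
        push_neg
        exact ⟨fun h => huu (Option.some.inj h), hxc'⟩
      rw [if_neg h6, htx, if_pos hB]
    · have htx : t.asg x = if s.asg x = some u ∨ x = c then none else s.asg x := by
        rw [hta]; simp [hB]
      simp only [hB, if_false]
      by_cases h4 : s.asg x = some u ∨ x = c
      · have h5 : t.asg x = none := by rw [htx, if_pos h4]
        rw [if_pos (by tauto : s.asg x = some u ∨ s.asg x = some u' ∨ x = c ∨ x = c')]
        by_cases h6 : t.asg x = some u' ∨ x = c'
        · rw [if_pos h6]
        · rw [if_neg h6, h5]
      · have h5 : t.asg x = s.asg x := by rw [htx, if_neg h4]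
        by_cases h6 : s.asg x = some u' ∨ x = c'
        · rw [if_pos (by rw [h5]; exact h6), if_pos (by tauto)]
        · rw [if_neg (by rw [h5]; exact h6), h5, if_neg (by tauto)]

theorem stepAt_asg_comm_unacc {s : Market.DAState} {c c' u : ℕ} {rest : List ℕ}
    (hne : c ≠ c') (hr : s.rem c = u :: rest) (hcu : c ∉ M.ubPref u) :
    (M.daStepAt c' (M.daStepAt c s)).asg = (M.daStepAt c (M.daStepAt c' s)).asg := by
  have h1 : (M.daStepAt c s).asg = s.asg := stepAt_asg_unacc hr hcu
  have h2 : (M.daStepAt c s).rem c' = s.rem c' := by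
    rw [stepAt_rem]; simp [Ne.symm hne]
  have h3 : (M.daStepAt c' s).rem c = u :: rest := by
    rw [stepAt_rem]; simp [hne, hr]
  rw [stepAt_asg_congr h1 h2, stepAt_asg_unacc h3 hcu]

theorem DAState.ext' {s t : Market.DAState}
    (h1 : s.rem = t.rem) (h2 : s.asg = t.asg) : s = t := by
  cases s; cases t; cases h1; cases h2; rfl

theorem stepAt_rem_comm {c c' : ℕ} (hne : c ≠ c') (s : Market.DAState) :
    (M.daStepAt c' (M.daStepAt c s)).rem = (M.daStepAt c (M.daStepAt c' s)).rem := by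
  rw [stepAt_rem, stepAt_rem, stepAt_rem, stepAt_rem]
  funext y
  by_cases h1 : y = c' <;> by_cases h2 : y = c <;>
    simp [h1, h2, hne, Ne.symm hne]

/-- The diamond property: distinct valid proposal steps commute. -/
theorem stepAt_comm {s : Market.DAState} {c c' : ℕ} (hne : c ≠ c')
    (hc : M.ValidChoice s c) (hc' : M.ValidChoice s c') :
    M.daStepAt c' (M.daStepAt c s) = M.daStepAt c (M.daStepAt c' s) := by
  obtain ⟨hlt, hac, hrne⟩ := hc
  obtain ⟨hlt', hac', hrne'⟩ := hc'
  obtain ⟨u, rest, hr⟩ := List.exists_cons_of_ne_nil hrne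
  obtain ⟨u', rest', hr'⟩ := List.exists_cons_of_ne_nil hrne'
  apply DAState.ext' (stepAt_rem_comm hne s)
  by_cases hcu : c ∈ M.ubPref u
  · by_cases hc'u' : c' ∈ M.ubPref u'
    · by_cases huu : u = u'
      · subst huu
        rw [double_same_u hne hr hr' hac hac' hcu hc'u',
          double_same_u hne.symm hr' hr hac' hac hc'u' hcu]
        funext x
        rw [kept2_comm (M := M) u s.asg c' c]
        by_cases h2 : x ∈ kept2 M u s.asg c c'
        · simp [h2]
        · simp only [h2, if_false]
          exact if_congr (by tauto) rfl rfl
      · rw [double_diff_u hne hr hr' hac hac' hcu hc'u' huu,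
          double_diff_u hne.symm hr' hr hac' hac hc'u' hcu (Ne.symm huu)]
        funext x
        by_cases hA : x ∈ kept M u' s.asg c'
        · by_cases hB : x ∈ kept M u s.asg c
          · exfalso
            rcases mem_kept hA with h1 | h1 <;> rcases mem_kept hB with h2 | h2
            · rw [h1] at h2; exact huu (Option.some.inj h2).symm
            · rw [h2, hac] at h1; cases h1
            · rw [h1, hac'] at h2; cases h2
            · exact hne (h2.symm.trans h1)
          · simp [hA, hB]
        · by_cases hB : x ∈ kept M u s.asg c
          · simp [hA, hB]
          · simp only [hA, hB, if_false]
            exact if_congr (by tauto) rfl rfl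
    · exact (stepAt_asg_comm_unacc hne.symm hr' hc'u').symm
  · exact stepAt_asg_comm_unacc hne hr hcu

theorem validChoice_preserved {s : Market.DAState} {c c' : ℕ}
    (hne : c' ≠ c) (h : M.ValidChoice s c') :
    M.ValidChoice (M.daStepAt c s) c' := by
  obtain ⟨h1, h2, h3⟩ := h
  refine ⟨h1, stepAt_asg_none hne h2, ?_⟩
  rw [stepAt_rem]
  simpa [hne] using h3

/-- Termination measure: total remaining list length. -/
def msr (M : Market) (s : Market.DAState) : ℕ :=
  ∑ x ∈ Finset.range M.numCU, (s.rem x).length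

theorem msr_lt {s : Market.DAState} {c : ℕ} (h : M.ValidChoice s c) :
    msr M (M.daStepAt c s) < msr M s := by
  obtain ⟨h1, _, h3⟩ := h
  unfold msr
  apply Finset.sum_lt_sum
  · intro i _
    rw [stepAt_rem]
    by_cases hi : i = c
    · rw [hi]
      have h5 : ((fun y => if y = c then (s.rem c).tail else s.rem y) c).length
          = (s.rem c).length - 1 := by simp [List.length_tail]
      omega
    · simp [hi]
  · refine ⟨c, Finset.mem_range.mpr h1, ?_⟩
    rw [stepAt_rem]
    have h5 : ((fun y => if y = c then (s.rem c).tail else s.rem y) c).length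
        = (s.rem c).length - 1 := by simp [List.length_tail]
    have : 0 < (s.rem c).length := List.length_pos_iff.mpr h3
    omega

theorem msr_pos {s : Market.DAState} {c : ℕ} (h : M.ValidChoice s c) :
    0 < msr M s := by
  obtain ⟨h1, _, h3⟩ := h
  have hc : 0 < (s.rem c).length := List.length_pos_iff.mpr h3
  have hle : (s.rem c).length ≤ msr M s :=
    Finset.single_le_sum (f := fun x => (s.rem x).length)
      (fun i _ => Nat.zero_le _) (Finset.mem_range.mpr h1)
  omega

theorem terminal_no_choice {s : Market.DAState} {c : ℕ}
    (ht : M.Terminal s) (hv : M.ValidChoice s c) : False := by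
  obtain ⟨h1, h2, h3⟩ := hv
  rcases ht c h1 with h | h
  · exact h h2
  · exact h3 h

/-- Strip lemma: a valid terminal run can be rearranged to start with any
given valid choice, with the same final state. -/
theorem strip : ∀ (cs : List ℕ) (s : Market.DAState) (c' : ℕ),
    M.ValidRun cs s → M.Terminal (M.runChoices cs s) → M.ValidChoice s c' →
    ∃ ds, M.ValidRun ds (M.daStepAt c' s) ∧
      M.runChoices ds (M.daStepAt c' s) = M.runChoices cs s
  | [], s, c', _, hterm, hvc => absurd hvc (fun h => terminal_no_choice hterm h)
  | c :: cs, s, c', hrun, hterm, hvc' => by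
    obtain ⟨hvcc, hrun⟩ := hrun
    by_cases hcc : c = c'
    · subst hcc; exact ⟨cs, hrun, rfl⟩
    · have hne : c ≠ c' := hcc
      have hvc'2 : M.ValidChoice (M.daStepAt c s) c' :=
        validChoice_preserved (Ne.symm hne) hvc'
      obtain ⟨ds, hds1, hds2⟩ :=
        strip cs (M.daStepAt c s) c' hrun hterm hvc'2
      have hcomm : M.daStepAt c (M.daStepAt c' s) = M.daStepAt c' (M.daStepAt c s) :=
        (stepAt_comm hne hvcc hvc').symm
      refine ⟨c :: ds, ⟨validChoice_preserved hne hvcc, ?_⟩, ?_⟩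
      · show M.ValidRun ds (M.daStepAt c (M.daStepAt c' s))
        rw [hcomm]; exact hds1
      · show M.runChoices ds (M.daStepAt c (M.daStepAt c' s)) = _
        rw [hcomm]; exact hds2

theorem main_aux : ∀ (n : ℕ) (s : Market.DAState) (cs₁ cs₂ : List ℕ),
    msr M s ≤ n → M.ValidRun cs₁ s → M.ValidRun cs₂ s →
    M.Terminal (M.runChoices cs₁ s) → M.Terminal (M.runChoices cs₂ s) →
    M.runChoices cs₁ s = M.runChoices cs₂ s := by
  intro n
  induction n with
  | zero =>
    intro s cs₁ cs₂ hm h1 h2 _ _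
    match cs₁, cs₂ with
    | [], [] => rfl
    | c :: cs₁, _ => exact absurd (msr_pos h1.1) (by omega)
    | [], c :: cs₂ => exact absurd (msr_pos h2.1) (by omega)
  | succ n ih =>
    intro s cs₁ cs₂ hm h1 h2 t1 t2
    match cs₁ with
    | [] =>
      match cs₂ with
      | [] => rfl
      | c :: cs₂ => exact absurd (terminal_no_choice t1 h2.1) id
    | c :: cs₁ =>
      obtain ⟨hvc, hrun1⟩ := h1
      obtain ⟨ds, hds1, hds2⟩ := strip cs₂ s c h2 t2 hvc
      have hm' : msr M (M.daStepAt c s) ≤ n := by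
        have := msr_lt hvc; omega
      have ht2' : M.Terminal (M.runChoices ds (M.daStepAt c s)) := by
        rw [hds2]; exact t2
      have := ih (M.daStepAt c s) cs₁ ds hm' hrun1 hds1 t1 ht2'
      show M.runChoices cs₁ (M.daStepAt c s) = _
      rw [this, hds2]

end DAProof

/-- deferred acceptance is order-independent — any two valid
terminal executions (regardless of the order in which unmatched CUs propose)
produce the same matching. -/
theorem DA_order_independent (M : Market) (cs₁ cs₂ : List ℕ)
    (h₁ : M.ValidRun cs₁ M.initState) (h₂ : M.ValidRun cs₂ M.initState)
    (t₁ : M.Terminal (M.runChoices cs₁ M.initState))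
    (t₂ : M.Terminal (M.runChoices cs₂ M.initState)) :
    (M.runChoices cs₁ M.initState).asg = (M.runChoices cs₂ M.initState).asg := by
  have h := DAProof.main_aux (M := M) (DAProof.msr M M.initState) M.initState cs₁ cs₂
    le_rfl h₁ h₂ t₁ t₂
  rw [h]
end

section
/- Rural hospitals theorem for the CU/UB market: every CU that is unmatched in one stable matching is unmatched in every stable matching, and every UB that does not fill its capacity in one stable matching is assigned exactly the same set of CUs in every stable matching. -/
section RHaux

open Finset

lemma rh_mem_assignedSet {M : Market} {μ : ℕ → Option ℕ} {u c : ℕ} :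
    c ∈ M.assignedSet μ u ↔ c < M.numCU ∧ μ c = some u := by
  simp [Market.assignedSet]

/-- If `u` is strictly preferred by `c` to its partner, then by stability
`u` is full and prefers all its assignees to `c`. -/
lemma rh_blockA (M : Market) {μ : ℕ → Option ℕ} (h : M.Stable μ) {c u : ℕ}
    (hc : c < M.numCU) (hu : u ∈ M.cuPref c) (hcu : c ∈ M.ubPref u)
    (hpref : ∀ v, μ c = some v → M.cuRank c u < M.cuRank c v) :
    M.cap u ≤ (M.assignedSet μ u).card ∧
      ∀ c' ∈ M.assignedSet μ u, M.ubRank u c' ≤ M.ubRank u c := by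
  have hnb := h.2.2 c u
  rw [Market.BlockingPair] at hnb
  push_neg at hnb
  exact hnb hc hu hcu hpref

lemma rh_rank_strict {l : List ℕ} {u v : ℕ} (hu : u ∈ l) (hv : v ∈ l) (hne : u ≠ v)
    (h : l.idxOf u ≤ l.idxOf v) : l.idxOf u < l.idxOf v :=
  lt_of_le_of_ne h (fun he => hne ((List.idxOf_inj hu).1 he))

/-- The "join" assignment: each CU picks the better of its two partners. -/
def rhPick (M : Market) (μ μ' : ℕ → Option ℕ) (c : ℕ) : Option ℕ :=
  match μ c, μ' c with
  | none, o => o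
  | some v, none => some v
  | some v, some w => if M.cuRank c v ≤ M.cuRank c w then some v else some w

lemma rhPick_some {M : Market} {μ μ' : ℕ → Option ℕ} {c u : ℕ}
    (h : rhPick M μ μ' c = some u) : μ c = some u ∨ μ' c = some u := by
  unfold rhPick at h
  rcases hm : μ c with _ | v <;> rcases hm' : μ' c with _ | w <;>
    rw [hm, hm'] at h <;> simp_all
  by_cases hr : M.cuRank c v ≤ M.cuRank c w <;> simp_all

lemma rhPick_le_left {M : Market} {μ μ' : ℕ → Option ℕ} {c u v : ℕ}
    (h : rhPick M μ μ' c = some u) (hv : μ c = some v) :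
    M.cuRank c u ≤ M.cuRank c v := by
  unfold rhPick at h
  rcases hm' : μ' c with _ | w <;> rw [hv, hm'] at h
  · simp_all
  · by_cases hr : M.cuRank c v ≤ M.cuRank c w <;> simp_all
    omega

lemma rhPick_le_right {M : Market} {μ μ' : ℕ → Option ℕ} {c u w : ℕ}
    (h : rhPick M μ μ' c = some u) (hw : μ' c = some w) :
    M.cuRank c u ≤ M.cuRank c w := by
  unfold rhPick at h
  rcases hm : μ c with _ | v <;> rw [hm, hw] at h
  · simp_all
  · by_cases hr : M.cuRank c v ≤ M.cuRank c w <;> simp_all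

lemma rhPick_isSome_left {M : Market} {μ μ' : ℕ → Option ℕ} {c v : ℕ}
    (hv : μ c = some v) : (rhPick M μ μ' c).isSome := by
  rcases hm' : μ' c with _ | w
  · simp [rhPick, hv, hm']
  · simp only [rhPick, hv, hm']
    split <;> simp

lemma rhPick_isSome_right {M : Market} {μ μ' : ℕ → Option ℕ} {c w : ℕ}
    (hw : μ' c = some w) : (rhPick M μ μ' c).isSome := by
  rcases hm : μ c with _ | v
  · simp [rhPick, hm, hw]
  · simp only [rhPick, hm, hw]
    split <;> simp

/-- Partition counting: the matched CUs are partitioned by their partners. -/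
lemma rh_card_filter (n : ℕ) (f : ℕ → Option ℕ) (U : Finset ℕ)
    (hU : ∀ c < n, ∀ u, f c = some u → u ∈ U) :
    ((Finset.range n).filter (fun c => (f c).isSome)).card
      = ∑ u ∈ U, ((Finset.range n).filter (fun c => f c = some u)).card := by
  rw [← Finset.card_biUnion]
  · congr 1
    ext c
    simp only [Finset.mem_filter, Finset.mem_biUnion, Finset.mem_range]
    constructor
    · rintro ⟨hc, hs⟩
      obtain ⟨u, hu⟩ := Option.isSome_iff_exists.mp hs
      exact ⟨u, hU c hc u hu, hc, hu⟩
    · rintro ⟨u, _, hc, hu⟩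
      exact ⟨hc, by simp [hu]⟩
  · intro u _ v _ huv
    refine Finset.disjoint_left.mpr fun c hcu hcv => ?_
    simp only [Finset.mem_filter] at hcu hcv
    exact huv (Option.some.inj (hcu.2.symm.trans hcv.2))

/-- Key lemma: if every member of `S` weakly prefers `u` to both of its
partners and is assigned to `u` in one of the two stable matchings, then
`S` has at most as many elements as `u`'s assignment in `μ`. -/
lemma rh_key (M : Market) {μ μ' : ℕ → Option ℕ} (hμ : M.Stable μ) (hμ' : M.Stable μ')
    (u : ℕ) (S : Finset ℕ) (hS : ∀ c ∈ S, c < M.numCU)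
    (h1 : ∀ c ∈ S, μ c = some u ∨ μ' c = some u)
    (h2 : ∀ c ∈ S, ∀ v, μ c = some v → M.cuRank c u ≤ M.cuRank c v)
    (h3 : ∀ c ∈ S, ∀ v, μ' c = some v → M.cuRank c u ≤ M.cuRank c v) :
    S.card ≤ (M.assignedSet μ u).card := by
  by_cases hall : ∀ c ∈ S, μ c = some u
  · exact Finset.card_le_card fun c hc => rh_mem_assignedSet.mpr ⟨hS c hc, hall c hc⟩
  · push_neg at hall
    obtain ⟨c, hcS, hcne⟩ := hall
    have hc' : μ' c = some u := (h1 c hcS).resolve_left hcne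
    have hir := hμ'.2.1 c u hc'
    have hstrict : ∀ v, μ c = some v → M.cuRank c u < M.cuRank c v := by
      intro v hv
      exact rh_rank_strict hir.1 (hμ.2.1 c v hv).1
        (fun he => hcne (by rw [he]; exact hv)) (h2 c hcS v hv)
    obtain ⟨hcap, hrank⟩ := rh_blockA M hμ (hS c hcS) hir.1 hir.2 hstrict
    by_cases hall' : ∀ c' ∈ S, μ' c' = some u
    · calc S.card ≤ (M.assignedSet μ' u).card :=
            Finset.card_le_card fun c' hc'' =>
              rh_mem_assignedSet.mpr ⟨hS c' hc'', hall' c' hc''⟩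
        _ ≤ M.cap u := hμ'.1.2 u
        _ ≤ _ := hcap
    · exfalso
      push_neg at hall'
      obtain ⟨c', hc'S, hc'ne⟩ := hall'
      have hc'μ : μ c' = some u := (h1 c' hc'S).resolve_right hc'ne
      have hir' := hμ.2.1 c' u hc'μ
      have hstrict' : ∀ v, μ' c' = some v → M.cuRank c' u < M.cuRank c' v := by
        intro v hv
        exact rh_rank_strict hir'.1 (hμ'.2.1 c' v hv).1
          (fun he => hc'ne (by rw [he]; exact hv)) (h3 c' hc'S v hv)
      obtain ⟨_, hrank'⟩ := rh_blockA M hμ' (hS c' hc'S) hir'.1 hir'.2 hstrict'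
      have ha : M.ubRank u c' ≤ M.ubRank u c :=
        hrank c' (rh_mem_assignedSet.mpr ⟨hS c' hc'S, hc'μ⟩)
      have hb : M.ubRank u c ≤ M.ubRank u c' :=
        hrank' c (rh_mem_assignedSet.mpr ⟨hS c hcS, hc'⟩)
      have hcc : c = c' := by
        have heq : (M.ubPref u).idxOf c = (M.ubPref u).idxOf c' := by
          have := le_antisymm hb ha
          simpa [Market.ubRank] using this
        exact (List.idxOf_inj hir.2).1 heq
      exact hc'ne (hcc ▸ hc')

end RHaux

/-- rural hospitals theorem: a CU unmatched in one stable
matching is unmatched in every stable matching, and a UB that does not fill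
its capacity in one stable matching is assigned exactly the same set of CUs
in every stable matching. -/
theorem rural_hospitals (M : Market) (μ μ' : ℕ → Option ℕ)
    (hμ : M.Stable μ) (hμ' : M.Stable μ') :
    (∀ c < M.numCU, μ c = none → μ' c = none) ∧
    (∀ u, (M.assignedSet μ u).card < M.cap u →
      M.assignedSet μ' u = M.assignedSet μ u) := by
  classical
  set n := M.numCU with hn
  set U : Finset ℕ := (Finset.range n).biUnion (fun c => (M.cuPref c).toFinset) with hUdef
  have hUmem : ∀ c < n, ∀ u, u ∈ M.cuPref c → u ∈ U := fun c hc u hu =>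
    Finset.mem_biUnion.mpr ⟨c, Finset.mem_range.mpr hc, List.mem_toFinset.mpr hu⟩
  have hUμ : ∀ c < n, ∀ u, μ c = some u → u ∈ U := fun c hc u h =>
    hUmem c hc u (hμ.2.1 c u h).1
  have hUμ' : ∀ c < n, ∀ u, μ' c = some u → u ∈ U := fun c hc u h =>
    hUmem c hc u (hμ'.2.1 c u h).1
  have hUp : ∀ c < n, ∀ u, rhPick M μ μ' c = some u → u ∈ U := fun c hc u h =>
    (rhPick_some h).elim (hUμ c hc u) (hUμ' c hc u)
  -- abbreviations
  set P : ℕ → Finset ℕ := fun u => (Finset.range n).filter (fun c => rhPick M μ μ' c = some u)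
    with hPdef
  have hAμ : ∀ u, M.assignedSet μ u = (Finset.range n).filter (fun c => μ c = some u) :=
    fun u => rfl
  have hAμ' : ∀ u, M.assignedSet μ' u = (Finset.range n).filter (fun c => μ' c = some u) :=
    fun u => rfl
  have sum1 := rh_card_filter n (rhPick M μ μ') U hUp
  have sum2 := rh_card_filter n μ U hUμ
  have sum3 := rh_card_filter n μ' U hUμ'
  -- per-UB bounds for P
  have hSlt : ∀ u, ∀ c ∈ P u, c < n := fun u c hc =>
    Finset.mem_range.mp (Finset.mem_filter.mp hc).1
  have hP1 : ∀ u, ∀ c ∈ P u, μ c = some u ∨ μ' c = some u := fun u c hc =>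
    rhPick_some (Finset.mem_filter.mp hc).2
  have hP2 : ∀ u, ∀ c ∈ P u, ∀ v, μ c = some v → M.cuRank c u ≤ M.cuRank c v :=
    fun u c hc v hv => rhPick_le_left (Finset.mem_filter.mp hc).2 hv
  have hP3 : ∀ u, ∀ c ∈ P u, ∀ v, μ' c = some v → M.cuRank c u ≤ M.cuRank c v :=
    fun u c hc v hv => rhPick_le_right (Finset.mem_filter.mp hc).2 hv
  have hPle1 : ∀ u, (P u).card ≤ (M.assignedSet μ u).card := fun u =>
    rh_key M hμ hμ' u (P u) (hSlt u) (hP1 u) (hP2 u) (hP3 u)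
  have hPle2 : ∀ u, (P u).card ≤ (M.assignedSet μ' u).card := fun u =>
    rh_key M hμ' hμ u (P u) (hSlt u) (fun c hc => (hP1 u c hc).symm) (hP3 u) (hP2 u)
  -- global counting
  have hDsub1 : ((Finset.range n).filter (fun c => (μ c).isSome))
      ⊆ ((Finset.range n).filter (fun c => (rhPick M μ μ' c).isSome)) := by
    intro c hc
    rw [Finset.mem_filter] at hc ⊢
    obtain ⟨v, hv⟩ := Option.isSome_iff_exists.mp hc.2
    exact ⟨hc.1, rhPick_isSome_left hv⟩
  have hDsub2 : ((Finset.range n).filter (fun c => (μ' c).isSome))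
      ⊆ ((Finset.range n).filter (fun c => (rhPick M μ μ' c).isSome)) := by
    intro c hc
    rw [Finset.mem_filter] at hc ⊢
    obtain ⟨v, hv⟩ := Option.isSome_iff_exists.mp hc.2
    exact ⟨hc.1, rhPick_isSome_right hv⟩
  have hsum_le1 : ∑ u ∈ U, (P u).card ≤ ∑ u ∈ U, (M.assignedSet μ u).card :=
    Finset.sum_le_sum fun u _ => hPle1 u
  have hsum_le2 : ∑ u ∈ U, (P u).card ≤ ∑ u ∈ U, (M.assignedSet μ' u).card :=
    Finset.sum_le_sum fun u _ => hPle2 u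
  have hsum_ge1 : ∑ u ∈ U, (M.assignedSet μ u).card ≤ ∑ u ∈ U, (P u).card := by
    calc ∑ u ∈ U, (M.assignedSet μ u).card
        = ((Finset.range n).filter (fun c => (μ c).isSome)).card := by
          rw [sum2]; exact Finset.sum_congr rfl fun u _ => by rw [hAμ u]
      _ ≤ ((Finset.range n).filter (fun c => (rhPick M μ μ' c).isSome)).card :=
          Finset.card_le_card hDsub1
      _ = ∑ u ∈ U, (P u).card := sum1
  have hsum_ge2 : ∑ u ∈ U, (M.assignedSet μ' u).card ≤ ∑ u ∈ U, (P u).card := by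
    calc ∑ u ∈ U, (M.assignedSet μ' u).card
        = ((Finset.range n).filter (fun c => (μ' c).isSome)).card := by
          rw [sum3]; exact Finset.sum_congr rfl fun u _ => by rw [hAμ' u]
      _ ≤ ((Finset.range n).filter (fun c => (rhPick M μ μ' c).isSome)).card :=
          Finset.card_le_card hDsub2
      _ = ∑ u ∈ U, (P u).card := sum1
  have heq1 : ∀ u ∈ U, (P u).card = (M.assignedSet μ u).card :=
    (Finset.sum_eq_sum_iff_of_le fun u _ => hPle1 u).mp
      (le_antisymm hsum_le1 hsum_ge1)
  have heq2 : ∀ u ∈ U, (P u).card = (M.assignedSet μ' u).card :=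
    (Finset.sum_eq_sum_iff_of_le fun u _ => hPle2 u).mp
      (le_antisymm hsum_le2 hsum_ge2)
  -- equality of the sets of matched CUs
  have hDeq1 : ((Finset.range n).filter (fun c => (μ c).isSome))
      = ((Finset.range n).filter (fun c => (rhPick M μ μ' c).isSome)) := by
    apply Finset.eq_of_subset_of_card_le hDsub1
    calc ((Finset.range n).filter (fun c => (rhPick M μ μ' c).isSome)).card
        = ∑ u ∈ U, (P u).card := sum1
      _ ≤ ∑ u ∈ U, (M.assignedSet μ u).card := hsum_le1
      _ = ((Finset.range n).filter (fun c => (μ c).isSome)).card := by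
          rw [sum2]; exact Finset.sum_congr rfl fun u _ => by rw [hAμ u]
  have hDeq2 : ((Finset.range n).filter (fun c => (μ' c).isSome))
      = ((Finset.range n).filter (fun c => (rhPick M μ μ' c).isSome)) := by
    apply Finset.eq_of_subset_of_card_le hDsub2
    calc ((Finset.range n).filter (fun c => (rhPick M μ μ' c).isSome)).card
        = ∑ u ∈ U, (P u).card := sum1
      _ ≤ ∑ u ∈ U, (M.assignedSet μ' u).card := hsum_le2
      _ = ((Finset.range n).filter (fun c => (μ' c).isSome)).card := by
          rw [sum3]; exact Finset.sum_congr rfl fun u _ => by rw [hAμ' u]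
  constructor
  · -- part 1
    intro c hc hnone
    by_contra h
    obtain ⟨v, hv⟩ := Option.ne_none_iff_exists'.mp h
    have hmem : c ∈ (Finset.range n).filter (fun c => (μ' c).isSome) :=
      Finset.mem_filter.mpr ⟨Finset.mem_range.mpr hc, by simp [hv]⟩
    rw [hDeq2, ← hDeq1] at hmem
    have := (Finset.mem_filter.mp hmem).2
    rw [hnone] at this
    simp at this
  · -- part 2
    intro u hcaplt
    by_cases hUu : u ∈ U
    · have ha := heq1 u hUu
      have hb := heq2 u hUu
      apply Finset.eq_of_subset_of_card_le
      · -- assignedSet μ' u ⊆ assignedSet μ u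
        intro c hc
        by_contra hcnot
        obtain ⟨hcn, hcμ'⟩ := rh_mem_assignedSet.mp hc
        have hμcne : μ c ≠ some u := fun h => hcnot (rh_mem_assignedSet.mpr ⟨hcn, h⟩)
        have hir := hμ'.2.1 c u hcμ'
        rcases hm : μ c with _ | v
        · -- c unmatched in μ, but prefers u: blocks μ
          have hblk := (rh_blockA M hμ hcn hir.1 hir.2
            (fun v hv => by rw [hm] at hv; cases hv)).1
          omega
        · by_cases hr : M.cuRank c u ≤ M.cuRank c v
          · have hvne : u ≠ v := fun he => hμcne (by rw [he]; exact hm)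
            have hstrict : ∀ w, μ c = some w → M.cuRank c u < M.cuRank c w := by
              intro w hw
              rw [hm] at hw
              cases Option.some.inj hw
              exact rh_rank_strict hir.1 (hμ.2.1 c v hm).1 hvne hr
            have hblk := (rh_blockA M hμ hcn hir.1 hir.2 hstrict).1
            omega
          · -- c prefers its μ-partner; compensate through P u
            have hvu : v ≠ u := by
              intro he
              exact hμcne (he ▸ hm)
            have hpc : rhPick M μ μ' c = some v := by
              unfold rhPick
              rw [hm, hcμ']
              simp [le_of_lt (not_le.mp hr)]
            have hcnotP : c ∉ P u := by
              intro hmm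
              have := (Finset.mem_filter.mp hmm).2
              rw [hpc] at this
              exact hvu (Option.some.inj this)
            have hnsub : ¬ (P u ⊆ M.assignedSet μ' u) := by
              intro hsub
              have : P u = M.assignedSet μ' u :=
                Finset.eq_of_subset_of_card_le hsub (le_of_eq hb.symm)
              rw [this] at hcnotP
              exact hcnotP hc
            obtain ⟨d, hdP, hdnot⟩ := Finset.not_subset.mp hnsub
            have hdn : d < n := hSlt u d hdP
            have hdpick : rhPick M μ μ' d = some u := (Finset.mem_filter.mp hdP).2
            have hdμ'ne : μ' d ≠ some u := fun h =>
              hdnot (rh_mem_assignedSet.mpr ⟨hdn, h⟩)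
            have hdμ : μ d = some u := (rhPick_some hdpick).resolve_right hdμ'ne
            have hdir := hμ.2.1 d u hdμ
            have hstrict : ∀ w, μ' d = some w → M.cuRank d u < M.cuRank d w := by
              intro w hw
              exact rh_rank_strict hdir.1 (hμ'.2.1 d w hw).1
                (fun he => hdμ'ne (by rw [he]; exact hw))
                (rhPick_le_right hdpick hw)
            have hblk := (rh_blockA M hμ' hdn hdir.1 hdir.2 hstrict).1
            -- cap u ≤ card (assignedSet μ' u) = card (assignedSet μ u) < cap u
            omega
      · -- card (assignedSet μ u) ≤ card (assignedSet μ' u)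
        omega
    · -- u not on anybody's list: both sets empty
      have e1 : M.assignedSet μ u = ∅ := by
        rw [Finset.eq_empty_iff_forall_notMem]
        intro c hc
        obtain ⟨hcn, hcm⟩ := rh_mem_assignedSet.mp hc
        exact hUu (hUμ c hcn u hcm)
      have e2 : M.assignedSet μ' u = ∅ := by
        rw [Finset.eq_empty_iff_forall_notMem]
        intro c hc
        obtain ⟨hcn, hcm⟩ := rh_mem_assignedSet.mp hc
        exact hUu (hUμ' c hcn u hcm)
      rw [e1, e2]
end
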